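/- For every integer q ≥ 2 there exists a constant C > 0 such that for every integer k ≥ 2, every integer n ≥ C·k·ln k, every q-colouring φ of the edges of the complete graph on [n], and every tuple (ρ_1, …, ρ_q) ∈ (0,1)^q with ρ_1 + ⋯ + ρ_q = 1, there exist a colour j ∈ [q] and a set S ⊆ [n] of size ℓ ≥ k such that the graph induced by S in colour j has minimum degree at least ρ_j(ℓ−1). -/

import Mathlib

open Finset

namespace QRaux

variable {n q : ℕ}

/-- degree of `v` in colour `j` inside `S` (matches the statement's expression). -/
def dg (φ : Finset (Fin n) → Fin q) (j : Fin q) (S : Finset (Fin n)) (v : Fin n) : ℕ :=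
  (S.filter (fun u => u ≠ v ∧ φ {u, v} = j)).card

/-- twice the number of `j`-edges inside `S`. -/
def DD (φ : Finset (Fin n) → Fin q) (j : Fin q) (S : Finset (Fin n)) : ℕ :=
  ∑ v ∈ S, dg φ j S v

/-- number of `j`-edges between `A` and `B` (for disjoint `A B`). -/
def XX (φ : Finset (Fin n) → Fin q) (j : Fin q) (A B : Finset (Fin n)) : ℕ :=
  ∑ a ∈ A, dg φ j B a

noncomputable def Phi (φ : Finset (Fin n) → Fin q) (ρ : Fin q → ℝ) (j : Fin q)
    (S : Finset (Fin n)) : ℝ :=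
  (DD φ j S : ℝ) - ρ j * ((S.card : ℝ) * ((S.card : ℝ) - 1))

lemma dg_union (φ : Finset (Fin n) → Fin q) (j : Fin q) {B C : Finset (Fin n)}
    (h : Disjoint B C) (v : Fin n) :
    dg φ j (B ∪ C) v = dg φ j B v + dg φ j C v := by
  unfold dg
  rw [filter_union, card_union_of_disjoint (disjoint_filter_filter h)]

lemma XX_comm (φ : Finset (Fin n) → Fin q) (j : Fin q) (A B : Finset (Fin n)) :
    XX φ j A B = XX φ j B A := by
  unfold XX dg
  simp only [card_filter]
  rw [Finset.sum_comm]
  apply Finset.sum_congr rfl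
  intro b _
  apply Finset.sum_congr rfl
  intro a _
  congr 1
  ext
  constructor <;> · rintro ⟨h1, h2⟩; exact ⟨h1.symm, by rwa [Finset.pair_comm]⟩

lemma DD_union (φ : Finset (Fin n) → Fin q) (j : Fin q) {A B : Finset (Fin n)}
    (h : Disjoint A B) :
    DD φ j (A ∪ B) = DD φ j A + DD φ j B + 2 * XX φ j A B := by
  unfold DD
  rw [Finset.sum_union h]
  have h1 : ∀ v ∈ A, dg φ j (A ∪ B) v = dg φ j A v + dg φ j B v := fun v _ => dg_union φ j h v
  have h2 : ∀ v ∈ B, dg φ j (A ∪ B) v = dg φ j A v + dg φ j B v := fun v _ => dg_union φ j h v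
  rw [Finset.sum_congr rfl h1, Finset.sum_congr rfl h2, Finset.sum_add_distrib,
    Finset.sum_add_distrib]
  have hsym : (∑ v ∈ B, dg φ j A v) = ∑ a ∈ A, dg φ j B a := XX_comm φ j B A
  unfold XX
  rw [hsym]
  ring


lemma Phi_union (φ : Finset (Fin n) → Fin q) (ρ : Fin q → ℝ) (j : Fin q)
    {A B : Finset (Fin n)} (h : Disjoint A B) :
    Phi φ ρ j (A ∪ B) = Phi φ ρ j A + Phi φ ρ j B +
      (2 * (XX φ j A B : ℝ) - 2 * ρ j * (A.card : ℝ) * (B.card : ℝ)) := by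
  unfold Phi
  rw [DD_union φ j h, card_union_of_disjoint h]
  push_cast
  ring

lemma Phi_empty (φ : Finset (Fin n) → Fin q) (ρ : Fin q → ℝ) (j : Fin q) :
    Phi φ ρ j ∅ = 0 := by
  unfold Phi DD
  simp

lemma dg_le (φ : Finset (Fin n) → Fin q) (j : Fin q) {S : Finset (Fin n)} {v : Fin n}
    (hv : v ∈ S) : dg φ j S v ≤ S.card - 1 := by
  unfold dg
  rw [← card_erase_of_mem hv]
  apply card_le_card
  intro u hu
  rw [mem_filter] at hu
  exact mem_erase.2 ⟨hu.2.1, hu.1⟩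

lemma DD_le (φ : Finset (Fin n) → Fin q) (j : Fin q) (S : Finset (Fin n)) :
    DD φ j S ≤ S.card * (S.card - 1) := by
  unfold DD
  calc ∑ v ∈ S, dg φ j S v ≤ ∑ _v ∈ S, (S.card - 1) :=
        Finset.sum_le_sum (fun v hv => dg_le φ j hv)
    _ = S.card * (S.card - 1) := by rw [Finset.sum_const, smul_eq_mul]

lemma cast_card_pred_nonneg (S : Finset (Fin n)) : (0:ℝ) ≤ (S.card : ℝ) * ((S.card : ℝ) - 1) := by
  rcases Nat.eq_zero_or_pos S.card with h | h
  · rw [h]; norm_num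
  · have h1 : (1:ℝ) ≤ (S.card : ℝ) := by exact_mod_cast h
    nlinarith

lemma cast_DD_le (φ : Finset (Fin n) → Fin q) (j : Fin q) (S : Finset (Fin n)) :
    (DD φ j S : ℝ) ≤ (S.card : ℝ) * ((S.card : ℝ) - 1) := by
  rcases Finset.eq_empty_or_nonempty S with rfl | hS
  · unfold DD; simp
  · have h1 : 1 ≤ S.card := Finset.card_pos.2 hS
    have := DD_le φ j S
    calc (DD φ j S : ℝ) ≤ ((S.card * (S.card - 1) : ℕ) : ℝ) := by exact_mod_cast this
      _ = (S.card : ℝ) * ((S.card : ℝ) - 1) := by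
          push_cast [Nat.cast_sub h1]
          ring

lemma Phi_le (φ : Finset (Fin n) → Fin q) (ρ : Fin q → ℝ) (j : Fin q)
    (hρ : 0 ≤ ρ j) (S : Finset (Fin n)) :
    Phi φ ρ j S ≤ (S.card : ℝ) * ((S.card : ℝ) - 1) := by
  unfold Phi
  have h1 := cast_DD_le φ j S
  have h2 : 0 ≤ ρ j * ((S.card : ℝ) * ((S.card : ℝ) - 1)) :=
    mul_nonneg hρ (cast_card_pred_nonneg S)
  linarith

lemma sum_dg (φ : Finset (Fin n) → Fin q) (hq : 0 < q) {S : Finset (Fin n)} {v : Fin n}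
    (hv : v ∈ S) : ∑ j : Fin q, dg φ j S v = S.card - 1 := by
  unfold dg
  simp only [card_filter]
  rw [Finset.sum_comm]
  have : ∀ u ∈ S, (∑ j : Fin q, if u ≠ v ∧ φ {u, v} = j then 1 else 0) =
      if u ≠ v then 1 else 0 := by
    intro u _
    by_cases huv : u ≠ v
    · have hstep : ∀ j : Fin q, (if u ≠ v ∧ φ {u, v} = j then (1:ℕ) else 0) =
          if φ {u, v} = j then 1 else 0 := by
        intro j; by_cases h2 : φ {u, v} = j <;> simp [huv, h2]
      rw [if_pos huv, Finset.sum_congr rfl (fun j _ => hstep j),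
        Finset.sum_ite_eq Finset.univ (φ {u, v}) (fun _ => 1)]
      simp
    · rw [if_neg huv]
      refine Finset.sum_eq_zero ?_
      intro j _
      rw [if_neg (by tauto)]
  rw [Finset.sum_congr rfl this, ← card_filter, Finset.filter_ne', card_erase_of_mem hv]

lemma sum_DD (φ : Finset (Fin n) → Fin q) (hq : 0 < q) (S : Finset (Fin n)) :
    ∑ j : Fin q, DD φ j S = S.card * (S.card - 1) := by
  unfold DD
  rw [Finset.sum_comm]
  have : ∀ v ∈ S, (∑ j : Fin q, dg φ j S v) = S.card - 1 := fun v hv => sum_dg φ hq hv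
  rw [Finset.sum_congr rfl this, Finset.sum_const, smul_eq_mul]

lemma sum_Phi (φ : Finset (Fin n) → Fin q) (ρ : Fin q → ℝ) (hq : 0 < q)
    (hρs : ∑ i, ρ i = 1) (S : Finset (Fin n)) :
    ∑ j : Fin q, Phi φ ρ j S = 0 := by
  unfold Phi
  rw [Finset.sum_sub_distrib, ← Finset.sum_mul, hρs, one_mul]
  rw [← Nat.cast_sum, sum_DD φ hq S]
  rcases Finset.eq_empty_or_nonempty S with rfl | hS
  · simp
  · have h1 : 1 ≤ S.card := Finset.card_pos.2 hS
    push_cast [Nat.cast_sub h1]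
    ring


lemma Phi_singleton (φ : Finset (Fin n) → Fin q) (ρ : Fin q → ℝ) (j : Fin q) (v : Fin n) :
    Phi φ ρ j {v} = 0 := by
  unfold Phi DD dg
  simp [Finset.filter_singleton]

lemma dg_erase (φ : Finset (Fin n) → Fin q) (j : Fin q) (S : Finset (Fin n)) (v : Fin n) :
    dg φ j (S.erase v) v = dg φ j S v := by
  unfold dg
  congr 1
  ext u
  simp only [mem_filter, mem_erase]
  tauto

lemma exists_pick (φ : Finset (Fin n) → Fin q) (ρ : Fin q → ℝ) (hq : 0 < q)
    (U : Finset (Fin n)) :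
    ∃ p : Fin q × Finset (Fin n), p.2 ⊆ U ∧
      ∀ j S, S ⊆ U → Phi φ ρ j S ≤ Phi φ ρ p.1 p.2 := by
  have hne : ((Finset.univ : Finset (Fin q)) ×ˢ U.powerset).Nonempty := by
    refine ⟨(⟨0, hq⟩, ∅), ?_⟩
    rw [Finset.mem_product]
    exact ⟨Finset.mem_univ _, Finset.empty_mem_powerset U⟩
  obtain ⟨p, hp, hmax⟩ := Finset.exists_max_image _ (fun p => Phi φ ρ p.1 p.2) hne
  refine ⟨p, ?_, ?_⟩
  · rw [Finset.mem_product] at hp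
    exact Finset.mem_powerset.1 hp.2
  · intro j S hS
    exact hmax (j, S) (by rw [Finset.mem_product]; exact ⟨Finset.mem_univ _, Finset.mem_powerset.2 hS⟩)

noncomputable def pick (φ : Finset (Fin n) → Fin q) (ρ : Fin q → ℝ) (hq : 0 < q)
    (U : Finset (Fin n)) : Fin q × Finset (Fin n) :=
  Classical.choose (exists_pick φ ρ hq U)

lemma pick_sub (φ : Finset (Fin n) → Fin q) (ρ : Fin q → ℝ) (hq : 0 < q)
    (U : Finset (Fin n)) : (pick φ ρ hq U).2 ⊆ U :=
  (Classical.choose_spec (exists_pick φ ρ hq U)).1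

lemma pick_max (φ : Finset (Fin n) → Fin q) (ρ : Fin q → ℝ) (hq : 0 < q)
    (U : Finset (Fin n)) : ∀ j S, S ⊆ U →
      Phi φ ρ j S ≤ Phi φ ρ (pick φ ρ hq U).1 (pick φ ρ hq U).2 :=
  (Classical.choose_spec (exists_pick φ ρ hq U)).2

section Failure

variable (φ : Finset (Fin n) → Fin q) (ρ : Fin q → ℝ) {k : ℕ}

/-- the failure hypothesis -/
def Bad (φ : Finset (Fin n) → Fin q) (ρ : Fin q → ℝ) (k : ℕ) : Prop :=
  ∀ (j : Fin q) (S : Finset (Fin n)), k ≤ S.card →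
    ∃ v ∈ S, (dg φ j S v : ℝ) < ρ j * ((S.card : ℝ) - 1)

lemma pick_card_lt (hq : 0 < q) (hbad : Bad φ ρ k) (hk : 2 ≤ k)
    (U : Finset (Fin n)) : ((pick φ ρ hq U).2).card < k := by
  by_contra hge
  push_neg at hge
  set c := (pick φ ρ hq U).1 with hc
  set T := (pick φ ρ hq U).2 with hT
  obtain ⟨v, hv, hlt⟩ := hbad c T hge
  have h1T : 1 ≤ T.card := le_trans (by omega) hge
  have hdisj : Disjoint ({v} : Finset (Fin n)) (T.erase v) := by
    simp [Finset.disjoint_singleton_left]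
  have hcup : ({v} : Finset (Fin n)) ∪ T.erase v = T := by
    rw [← Finset.insert_eq, Finset.insert_erase hv]
  have hXX : XX φ c {v} (T.erase v) = dg φ c T v := by
    unfold XX
    rw [Finset.sum_singleton, dg_erase]
  have hexp := Phi_union φ ρ c hdisj
  rw [hcup, hXX, Phi_singleton] at hexp
  have hmono : Phi φ ρ c (T.erase v) ≤ Phi φ ρ c T :=
    pick_max φ ρ hq U c (T.erase v) ((Finset.erase_subset _ _).trans (pick_sub φ ρ hq U))
  have hcard : ((T.erase v).card : ℝ) = (T.card : ℝ) - 1 := by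
    rw [Finset.card_erase_of_mem hv]
    push_cast [Nat.cast_sub h1T]
    ring
  rw [hcard] at hexp
  simp only [Finset.card_singleton, Nat.cast_one] at hexp
  have : ρ c * ((T.card : ℝ) - 1) ≤ (dg φ c T v : ℝ) := by nlinarith
  linarith

lemma heavy_unique (hρ0 : ∀ i, 0 < ρ i) (hρs : ∑ i, ρ i = 1) :
    ∀ a b : Fin q, 1/2 < ρ a → 1/2 < ρ b → a = b := by
  intro a b ha hb
  by_contra hne
  have hsub : ({a, b} : Finset (Fin q)) ⊆ Finset.univ := Finset.subset_univ _
  have hle : ∑ i ∈ ({a, b} : Finset (Fin q)), ρ i ≤ ∑ i, ρ i :=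
    Finset.sum_le_sum_of_subset_of_nonneg hsub (fun i _ _ => (hρ0 i).le)
  rw [Finset.sum_pair hne, hρs] at hle
  linarith

lemma pick_one_le (hq : 0 < q) (hρ0 : ∀ i, 0 < ρ i) (hρ1 : ∀ i, ρ i < 1)
    (hρs : ∑ i, ρ i = 1) (hbad : Bad φ ρ k) (hk : 2 ≤ k)
    (U : Finset (Fin n)) (hU : k ≤ U.card) :
    1 ≤ Phi φ ρ (pick φ ρ hq U).1 (pick φ ρ hq U).2 := by
  by_cases hcase : ∃ u ∈ U, ∃ w ∈ U, u ≠ w ∧ ρ (φ {u, w}) ≤ 1/2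
  · obtain ⟨u, hu, w, hw, huw, hρc⟩ := hcase
    set c := φ {u, w} with hcdef
    have hSU : ({u, w} : Finset (Fin n)) ⊆ U := by
      intro x hx
      rcases Finset.mem_insert.1 hx with rfl | hx
      · exact hu
      · rw [Finset.mem_singleton] at hx; subst hx; exact hw
    have hcard2 : ({u, w} : Finset (Fin n)).card = 2 := Finset.card_pair huw
    have hdgw : dg φ c {u, w} w = 1 := by
      unfold dg
      have : ({u, w} : Finset (Fin n)).filter (fun x => x ≠ w ∧ φ {x, w} = c) = {u} := by
        ext x
        simp only [Finset.mem_filter, Finset.mem_insert, Finset.mem_singleton]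
        constructor
        · rintro ⟨rfl | rfl, hxw, _⟩
          · rfl
          · exact absurd rfl hxw
        · rintro rfl
          exact ⟨Or.inl rfl, huw, hcdef.symm⟩
      rw [this, Finset.card_singleton]
    have hdgu : dg φ c {u, w} u = 1 := by
      unfold dg
      have : ({u, w} : Finset (Fin n)).filter (fun x => x ≠ u ∧ φ {x, u} = c) = {w} := by
        ext x
        simp only [Finset.mem_filter, Finset.mem_insert, Finset.mem_singleton]
        constructor
        · rintro ⟨rfl | rfl, hxu, _⟩
          · exact absurd rfl hxu
          · rfl
        · rintro rfl
          refine ⟨Or.inr rfl, huw.symm, ?_⟩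
          rw [Finset.pair_comm]
      rw [this, Finset.card_singleton]
    have hDD : DD φ c {u, w} = 2 := by
      unfold DD
      rw [Finset.sum_pair huw, hdgu, hdgw]
    have hPhi : Phi φ ρ c {u, w} = 2 - 2 * ρ c := by
      unfold Phi
      rw [hDD, hcard2]
      norm_num
      ring
    have h1 : 1 ≤ Phi φ ρ c {u, w} := by rw [hPhi]; linarith
    exact le_trans h1 (pick_max φ ρ hq U c {u, w} hSU)
  · exfalso
    push_neg at hcase
    obtain ⟨S, hSU, hScard⟩ := Finset.exists_subset_card_eq hU
    have h1S : 1 < S.card := by omega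
    obtain ⟨u₀, hu₀, w₀, hw₀, hne₀⟩ := Finset.one_lt_card.1 h1S
    set c := φ {u₀, w₀} with hcdef
    have hc : 1/2 < ρ c := hcase u₀ (hSU hu₀) w₀ (hSU hw₀) hne₀
    have hfil : ∀ v ∈ S, S.filter (fun x => x ≠ v ∧ φ {x, v} = c) = S.erase v := by
      intro v hv
      ext x
      simp only [Finset.mem_filter, Finset.mem_erase]
      constructor
      · rintro ⟨hx, hxv, _⟩; exact ⟨hxv, hx⟩
      · rintro ⟨hxv, hx⟩
        refine ⟨hx, hxv, ?_⟩
        have := hcase x (hSU hx) v (hSU hv) hxv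
        exact heavy_unique ρ hρ0 hρs _ _ this hc
    obtain ⟨v, hv, hlt⟩ := hbad c S (le_of_eq hScard.symm)
    have hdg : dg φ c S v = S.card - 1 := by
      unfold dg
      rw [hfil v hv, Finset.card_erase_of_mem hv]
    rw [hdg, hScard] at hlt
    have hcast : ((k - 1 : ℕ) : ℝ) = (k : ℝ) - 1 := by
      push_cast [Nat.cast_sub (by omega : 1 ≤ k)]
      ring
    rw [hcast] at hlt
    have hkpos : (0:ℝ) < (k : ℝ) - 1 := by
      have : (2:ℝ) ≤ (k:ℝ) := by exact_mod_cast hk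
      linarith
    nlinarith [hρ1 c]

end Failure

section Chain

variable (φ : Finset (Fin n) → Fin q) (ρ : Fin q → ℝ)

noncomputable def Us (hq : 0 < q) (U₀ : Finset (Fin n)) : ℕ → Finset (Fin n)
  | 0 => U₀
  | l + 1 => (Us hq U₀ l) \ (pick φ ρ hq (Us hq U₀ l)).2

noncomputable def Blk (hq : 0 < q) (U₀ : Finset (Fin n)) (l : ℕ) : Finset (Fin n) :=
  (pick φ ρ hq (Us φ ρ hq U₀ l)).2

noncomputable def Col (hq : 0 < q) (U₀ : Finset (Fin n)) (l : ℕ) : Fin q :=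
  (pick φ ρ hq (Us φ ρ hq U₀ l)).1

lemma Us_succ (hq : 0 < q) (U₀ : Finset (Fin n)) (l : ℕ) :
    Us φ ρ hq U₀ (l + 1) = Us φ ρ hq U₀ l \ Blk φ ρ hq U₀ l := rfl

lemma Blk_sub (hq : 0 < q) (U₀ : Finset (Fin n)) (l : ℕ) :
    Blk φ ρ hq U₀ l ⊆ Us φ ρ hq U₀ l := pick_sub φ ρ hq _

lemma Us_mono (hq : 0 < q) (U₀ : Finset (Fin n)) {a b : ℕ} (h : a ≤ b) :
    Us φ ρ hq U₀ b ⊆ Us φ ρ hq U₀ a := by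
  induction b with
  | zero => rw [Nat.le_zero.1 h]
  | succ b ih =>
      rcases Nat.lt_or_ge a (b+1) with h' | h'
      · have : a ≤ b := by omega
        exact (Finset.sdiff_subset).trans (ih this)
      · have : a = b + 1 := by omega
        rw [this]

lemma Us_lt (hq : 0 < q) (U₀ : Finset (Fin n)) {a b : ℕ} (h : a < b) :
    Us φ ρ hq U₀ b ⊆ Us φ ρ hq U₀ a \ Blk φ ρ hq U₀ a := by
  have : Us φ ρ hq U₀ b ⊆ Us φ ρ hq U₀ (a+1) := Us_mono φ ρ hq U₀ h
  rwa [Us_succ] at this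

lemma Us_sub_zero (hq : 0 < q) (U₀ : Finset (Fin n)) (l : ℕ) :
    Us φ ρ hq U₀ l ⊆ U₀ := Us_mono φ ρ hq U₀ (Nat.zero_le l)

lemma Blk_disjoint (hq : 0 < q) (U₀ : Finset (Fin n)) {a b : ℕ} (h : a ≠ b) :
    Disjoint (Blk φ ρ hq U₀ a) (Blk φ ρ hq U₀ b) := by
  rcases Nat.lt_or_ge a b with h' | h'
  · have hsub := (Blk_sub φ ρ hq U₀ b).trans (Us_lt φ ρ hq U₀ h')
    exact Finset.disjoint_sdiff.mono_right hsub
  · have hb : b < a := by omega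
    have hsub := (Blk_sub φ ρ hq U₀ a).trans (Us_lt φ ρ hq U₀ hb)
    exact (Finset.disjoint_sdiff.mono_right hsub).symm

lemma card_Us {k : ℕ} (hq : 0 < q) (hbad : Bad φ ρ k) (hk : 2 ≤ k)
    (U₀ : Finset (Fin n)) (l : ℕ) :
    U₀.card ≤ (Us φ ρ hq U₀ l).card + l * k := by
  induction l with
  | zero => simp [Us]
  | succ l ih =>
      have h1 : (Us φ ρ hq U₀ l).card ≤ (Us φ ρ hq U₀ (l+1)).card + k := by
        rw [Us_succ]
        calc (Us φ ρ hq U₀ l).card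
            ≤ (Us φ ρ hq U₀ l \ Blk φ ρ hq U₀ l).card + (Blk φ ρ hq U₀ l).card :=
              Finset.card_le_card_sdiff_add_card
          _ ≤ (Us φ ρ hq U₀ l \ Blk φ ρ hq U₀ l).card + k := by
              have hb : (Blk φ ρ hq U₀ l).card < k :=
                pick_card_lt φ ρ hq hbad hk (Us φ ρ hq U₀ l)
              omega
      calc U₀.card ≤ (Us φ ρ hq U₀ l).card + l * k := ih
        _ ≤ ((Us φ ρ hq U₀ (l+1)).card + k) + l * k := by omega
        _ = (Us φ ρ hq U₀ (l+1)).card + (l+1) * k := by ring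

lemma dg_biUnion (j : Fin q) (J : Finset ℕ) (B : ℕ → Finset (Fin n))
    (hdis : ∀ x ∈ J, ∀ y ∈ J, x ≠ y → Disjoint (B x) (B y)) (v : Fin n) :
    dg φ j (J.biUnion B) v = ∑ l ∈ J, dg φ j (B l) v := by
  unfold dg
  rw [Finset.filter_biUnion]
  exact Finset.card_biUnion (fun x hx y hy hxy =>
    Finset.disjoint_filter_filter (hdis x hx y hy hxy))

lemma XX_biUnion (j : Fin q) (A : Finset (Fin n)) (J : Finset ℕ) (B : ℕ → Finset (Fin n))
    (hdis : ∀ x ∈ J, ∀ y ∈ J, x ≠ y → Disjoint (B x) (B y)) :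
    (XX φ j A (J.biUnion B) : ℝ) = ∑ l ∈ J, (XX φ j A (B l) : ℝ) := by
  unfold XX
  push_cast
  rw [Finset.sum_comm]
  apply Finset.sum_congr rfl
  intro a _
  exact_mod_cast congrArg (Nat.cast (R := ℝ)) (dg_biUnion φ j J B hdis a)

end Chain

section Key

variable (φ : Finset (Fin n) → Fin q) (ρ : Fin q → ℝ)

lemma key {k : ℕ} (hq : 0 < q) (hq2 : 2 ≤ q) (hρ0 : ∀ i, 0 < ρ i) (hρ1 : ∀ i, ρ i < 1)
    (hρs : ∑ i, ρ i = 1) (hbad : Bad φ ρ k) (hk : 2 ≤ k) :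
    ∀ m : ℕ, ∀ U : Finset (Fin n),
      (2 + m * (q * (2*q+2) + 1)) * k ≤ U.card →
      (2:ℝ)^m ≤ Phi φ ρ (pick φ ρ hq U).1 (pick φ ρ hq U).2 := by
  intro m
  induction m with
  | zero =>
      intro U hU
      have hU' : k ≤ U.card := by
        refine le_trans ?_ hU
        simp only [Nat.zero_mul, Nat.mul_zero, Nat.zero_add, Nat.add_zero]
        omega
      simpa using pick_one_le φ ρ hq hρ0 hρ1 hρs hbad hk U hU'
  | succ m ih =>
      intro U hU
      set R : ℕ := q * (2*q+2) with hRdef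
      set M : ℝ := Phi φ ρ (pick φ ρ hq U).1 (pick φ ρ hq U).2 with hM
      -- universes are large enough
      have hcardl : ∀ l, l ≤ R → (2 + m*(R+1)) * k ≤ (Us φ ρ hq U l).card := by
        intro l hl
        have h1 := card_Us φ ρ hq hbad hk U l
        have h2 : l * k ≤ R * k := Nat.mul_le_mul_right k hl
        have h3 : (2 + (m+1)*(R+1)) * k = (2 + m*(R+1)) * k + R * k + k := by ring
        omega
      -- IH at every level
      have hsig : ∀ l, l ≤ R →
          (2:ℝ)^m ≤ Phi φ ρ (Col φ ρ hq U l) (Blk φ ρ hq U l) := by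
        intro l hl
        exact ih (Us φ ρ hq U l) (hcardl l hl)
      -- pigeonhole: a colour with 2q+2 blocks among the first R
      have hNe : Nonempty (Fin q) := ⟨⟨0, hq⟩⟩
      have hcount : (Finset.univ : Finset (Fin q)).card * (2*q+2) ≤ (Finset.range R).card := by
        rw [Finset.card_range, Finset.card_univ, Fintype.card_fin]
      obtain ⟨c, -, hcfib⟩ := Finset.exists_le_card_fiber_of_mul_le_card_of_maps_to
        (f := fun l => Col φ ρ hq U l) (fun a _ => Finset.mem_univ _)
        Finset.univ_nonempty hcount
      obtain ⟨I, hIsub, hIcard⟩ := Finset.exists_subset_card_eq hcfib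
      have hIfacts : ∀ l ∈ I, l < R ∧ Col φ ρ hq U l = c := by
        intro l hl
        have h := hIsub hl
        rw [Finset.mem_filter, Finset.mem_range] at h
        exact h
      -- the suffix-union estimate
      have claim : ∀ J : Finset ℕ, J ⊆ I →
          2 * Phi φ ρ c (J.biUnion (Blk φ ρ hq U)) ≤
            2 * (J.card:ℝ) * M - (J.card:ℝ) * ((J.card:ℝ) - 1) * (2:ℝ)^m := by
        intro J
        induction J using Finset.induction_on_min with
        | empty => intro _; simp [Phi_empty]
        | insert a J' hmin ihJ =>
            intro hsub
            have haI : a ∈ I := hsub (Finset.mem_insert_self a J')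
            have hJ'I : J' ⊆ I := fun x hx => hsub (Finset.mem_insert_of_mem hx)
            have haR : a < R := (hIfacts a haI).1
            have hcola : Col φ ρ hq U a = c := (hIfacts a haI).2
            have hanotJ : a ∉ J' := fun h => lt_irrefl a (hmin a h)
            set A := Blk φ ρ hq U a with hA
            set W' := J'.biUnion (Blk φ ρ hq U) with hW'
            have hpdis : ∀ x ∈ J', ∀ y ∈ J', x ≠ y →
                Disjoint (Blk φ ρ hq U x) (Blk φ ρ hq U y) :=
              fun x _ y _ hxy => Blk_disjoint φ ρ hq U hxy
            have hW'sub : W' ⊆ Us φ ρ hq U (a+1) := by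
              rw [hW']
              apply Finset.biUnion_subset.2
              intro l hl
              exact (Blk_sub φ ρ hq U l).trans (Us_mono φ ρ hq U (hmin l hl))
            have hW'sub2 : W' ⊆ Us φ ρ hq U a \ A := by
              rw [hA, ← Us_succ φ ρ hq U a]
              exact hW'sub
            have hdisj : Disjoint A W' := Finset.disjoint_sdiff.mono_right hW'sub2
            have hWUa : A ∪ W' ⊆ Us φ ρ hq U a :=
              Finset.union_subset (Blk_sub φ ρ hq U a)
                (hW'sub2.trans Finset.sdiff_subset)
            -- pairwise cross bounds
            have hpair : ∀ l ∈ J',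
                2 * (XX φ c A (Blk φ ρ hq U l) : ℝ)
                  - 2 * ρ c * (A.card:ℝ) * ((Blk φ ρ hq U l).card:ℝ)
                  ≤ -(2:ℝ)^m := by
              intro l hl
              have hlI := hJ'I hl
              have hal : a ≠ l := fun h => hanotJ (h ▸ hl)
              have hdab : Disjoint A (Blk φ ρ hq U l) := Blk_disjoint φ ρ hq U hal
              have hsubl : A ∪ Blk φ ρ hq U l ⊆ Us φ ρ hq U a :=
                Finset.union_subset (Blk_sub φ ρ hq U a)
                  ((Blk_sub φ ρ hq U l).trans (Us_mono φ ρ hq U (le_of_lt (hmin l hl))))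
              have hmax : Phi φ ρ c (A ∪ Blk φ ρ hq U l) ≤ Phi φ ρ c A := by
                have h := pick_max φ ρ hq (Us φ ρ hq U a) c _ hsubl
                have h2 : Phi φ ρ (Col φ ρ hq U a) (Blk φ ρ hq U a) =
                    Phi φ ρ c A := by rw [hcola, hA]
                exact le_trans h (le_of_eq h2)
              have hexp := Phi_union φ ρ c hdab
              rw [hexp] at hmax
              have hsigl : (2:ℝ)^m ≤ Phi φ ρ c (Blk φ ρ hq U l) := by
                have h := hsig l (le_of_lt (hIfacts l hlI).1)
                rwa [(hIfacts l hlI).2] at h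
              linarith
            -- sum the cross bounds
            have hXsum : (XX φ c A W' : ℝ) =
                ∑ l ∈ J', (XX φ c A (Blk φ ρ hq U l) : ℝ) := by
              rw [hW']
              exact XX_biUnion φ c A J' _ hpdis
            have hcardW' : (W'.card : ℝ) = ∑ l ∈ J', ((Blk φ ρ hq U l).card : ℝ) := by
              rw [hW', Finset.card_biUnion hpdis]
              push_cast
              rfl
            have hcross : 2 * (XX φ c A W' : ℝ) - 2 * ρ c * (A.card:ℝ) * (W'.card:ℝ)
                ≤ -(J'.card:ℝ) * (2:ℝ)^m := by
              have heq : 2 * (XX φ c A W' : ℝ) - 2 * ρ c * (A.card:ℝ) * (W'.card:ℝ)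
                  = ∑ l ∈ J', (2 * (XX φ c A (Blk φ ρ hq U l) : ℝ)
                    - 2 * ρ c * (A.card:ℝ) * ((Blk φ ρ hq U l).card:ℝ)) := by
                rw [hXsum, hcardW', Finset.mul_sum, Finset.mul_sum, ← Finset.sum_sub_distrib]
              rw [heq]
              calc ∑ l ∈ J', (2 * (XX φ c A (Blk φ ρ hq U l) : ℝ)
                    - 2 * ρ c * (A.card:ℝ) * ((Blk φ ρ hq U l).card:ℝ))
                  ≤ ∑ _l ∈ J', (-(2:ℝ)^m) := Finset.sum_le_sum hpair
                _ = -(J'.card:ℝ) * (2:ℝ)^m := by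
                    rw [Finset.sum_const, nsmul_eq_mul]
                    ring
            -- the first block's value is at most M
            have hsiga : Phi φ ρ c A ≤ M := by
              rw [hM]
              exact pick_max φ ρ hq U c A ((Blk_sub φ ρ hq U a).trans (Us_sub_zero φ ρ hq U a))
            have hIH := ihJ hJ'I
            have hexp := Phi_union φ ρ c hdisj
            rw [Finset.biUnion_insert]
            have hcardins : ((insert a J').card : ℝ) = (J'.card : ℝ) + 1 := by
              rw [Finset.card_insert_of_notMem hanotJ]
              push_cast
              ring
            rw [hcardins, hexp]
            have hringf : ((J'.card:ℝ) + 1) * (((J'.card:ℝ) + 1) - 1) * (2:ℝ)^m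
                = (J'.card:ℝ)*((J'.card:ℝ)-1)*(2:ℝ)^m + 2*(J'.card:ℝ)*(2:ℝ)^m := by
              ring
            linarith
      -- apply the claim to the whole family I
      have hWsubU : I.biUnion (Blk φ ρ hq U) ⊆ U := by
        apply Finset.biUnion_subset.2
        intro l _
        exact (Blk_sub φ ρ hq U l).trans (Us_sub_zero φ ρ hq U l)
      have hupper := claim I (Finset.Subset.refl I)
      rw [hIcard] at hupper
      -- lower bound via the colour sum
      have hlow : -(((q:ℝ) - 1) * M) ≤ Phi φ ρ c (I.biUnion (Blk φ ρ hq U)) := by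
        have hzero := sum_Phi φ ρ hq hρs (I.biUnion (Blk φ ρ hq U))
        have hsplit := Finset.add_sum_erase Finset.univ
          (fun j => Phi φ ρ j (I.biUnion (Blk φ ρ hq U))) (Finset.mem_univ c)
        have hbound : ∑ j ∈ Finset.univ.erase c, Phi φ ρ j (I.biUnion (Blk φ ρ hq U))
            ≤ ((q:ℝ) - 1) * M := by
          calc ∑ j ∈ Finset.univ.erase c, Phi φ ρ j (I.biUnion (Blk φ ρ hq U))
              ≤ ∑ _j ∈ Finset.univ.erase c, M :=
                Finset.sum_le_sum (fun j _ => by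
                  rw [hM]; exact pick_max φ ρ hq U j _ hWsubU)
            _ = ((Finset.univ.erase c).card : ℝ) * M := by
                rw [Finset.sum_const, nsmul_eq_mul]
            _ = ((q:ℝ) - 1) * M := by
                rw [Finset.card_erase_of_mem (Finset.mem_univ c), Finset.card_univ,
                  Fintype.card_fin]
                have h1q : 1 ≤ q := by omega
                push_cast [Nat.cast_sub h1q]
                ring
        linarith [hsplit, hzero, hbound]
      -- conclude
      have h2m : (0:ℝ) < (2:ℝ)^m := by positivity
      have hq2' : (2:ℝ) ≤ (q:ℝ) := by exact_mod_cast hq2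
      have hrr : 4*((q:ℝ) - 1 + ((2*q+2:ℕ):ℝ)) ≤ ((2*q+2:ℕ):ℝ)*(((2*q+2:ℕ):ℝ)-1) := by
        push_cast
        nlinarith
      have hfin : 2*(2:ℝ)^m ≤ M := by
        have hqr : (0:ℝ) < (q:ℝ) - 1 + ((2*q+2:ℕ):ℝ) := by push_cast; nlinarith
        nlinarith [hupper, hlow, h2m, hrr, hqr]
      calc (2:ℝ)^(m+1) = 2*(2:ℝ)^m := by ring
        _ ≤ M := hfin

end Key

end QRaux

/-- **Quasi-Ramsey with ν = 0 and varying degree shares.**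
For every `q ≥ 2` there is `C > 0` such that for every `k ≥ 2`, every `n ≥ C·k·ln k`, every
`q`-colouring `φ` of the edges of the complete graph on `[n]`, and every tuple
`(ρ 1, …, ρ q) ∈ (0,1)^q` with `∑ ρ i = 1`, there are a colour `j` and a set `S` of size
`ℓ ≥ k` such that the graph induced by `S` in colour `j` has minimum degree at least
`ρ j · (ℓ−1)`. -/
theorem stmt10 (q : ℕ) (hq : 2 ≤ q) :
    ∃ C : ℝ, 0 < C ∧ ∀ k : ℕ, 2 ≤ k → ∀ n : ℕ, C * k * Real.log k ≤ n →
      ∀ φ : Finset (Fin n) → Fin q,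
      ∀ ρ : Fin q → ℝ, (∀ i, ρ i ∈ Set.Ioo (0 : ℝ) 1) → ∑ i, ρ i = 1 →
      ∃ j : Fin q, ∃ S : Finset (Fin n), k ≤ S.card ∧
        ∀ v ∈ S,
          ρ j * ((S.card : ℝ) - 1) ≤
            ((S.filter (fun u => u ≠ v ∧ φ {u, v} = j)).card : ℝ) := by
  classical
  set R : ℕ := q * (2*q+2) with hRdef
  refine ⟨((100 * (R+1) : ℕ) : ℝ), by positivity, ?_⟩
  intro k hk n hn φ ρ hIoo hsum
  by_contra hcon
  push_neg at hcon
  have hq0 : 0 < q := by omega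
  have hρ0 : ∀ i, 0 < ρ i := fun i => (hIoo i).1
  have hρ1 : ∀ i, ρ i < 1 := fun i => (hIoo i).2
  have hbad : QRaux.Bad φ ρ k := by
    intro j S hS
    exact hcon j S hS
  -- choice of m
  set L : ℕ := Nat.log 2 k with hLdef
  set m : ℕ := 2 * (L + 1) with hmdef
  -- real-log estimates
  have hk0 : k ≠ 0 := by omega
  have hkR : (2:ℝ) ≤ (k:ℝ) := by exact_mod_cast hk
  have hlogk2 : Real.log 2 ≤ Real.log k := Real.log_le_log (by norm_num) hkR
  have hlog2 : (1:ℝ)/2 < Real.log 2 := by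
    have := Real.log_two_gt_d9
    linarith
  have hlogk : (1:ℝ)/2 ≤ Real.log k := by linarith
  have hL2 : (L:ℝ) ≤ 2 * Real.log k := by
    have h1 : (2:ℕ)^L ≤ k := Nat.pow_log_le_self 2 hk0
    have h2 : ((2:ℝ))^L ≤ (k:ℝ) := by exact_mod_cast h1
    have h3 : Real.log ((2:ℝ)^L) ≤ Real.log k :=
      Real.log_le_log (by positivity) h2
    rw [Real.log_pow] at h3
    nlinarith
  have hR1 : (1:ℝ) ≤ ((R+1 : ℕ):ℝ) := by exact_mod_cast Nat.one_le_iff_ne_zero.2 (by omega)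
  -- n is large enough
  have hnk : (2 + m*(R+1)) * k ≤ n := by
    have hreal : (((2 + m*(R+1)) * k : ℕ) : ℝ) ≤ (n:ℝ) := by
      refine le_trans ?_ hn
      push_cast
      have hkpos : (0:ℝ) ≤ (k:ℝ) := by positivity
      have hmain : (2:ℝ) + (2*((L:ℝ)+1))*((R:ℝ)+1) ≤ (100*((R:ℝ)+1)) * Real.log k := by
        have hRR : (1:ℝ) ≤ (R:ℝ)+1 := by push_cast at hR1 ⊢; linarith
        nlinarith [mul_le_mul_of_nonneg_right hL2 (by linarith : (0:ℝ) ≤ (R:ℝ)+1),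
          mul_le_mul_of_nonneg_left hlogk (by linarith : (0:ℝ) ≤ (R:ℝ)+1)]
      calc ((2:ℝ) + (m:ℝ)*((R:ℝ)+1)) * (k:ℝ)
          ≤ ((100*((R:ℝ)+1)) * Real.log k) * (k:ℝ) := by
            apply mul_le_mul_of_nonneg_right _ hkpos
            have : (m:ℝ) = 2*((L:ℝ)+1) := by rw [hmdef]; push_cast; ring
            rw [this]
            exact hmain
        _ = 100 * ((R:ℝ)+1) * (k:ℝ) * Real.log k := by ring
    exact_mod_cast hreal
  -- apply the key lemma to the full universe
  have hcardU : (2 + m*(R+1)) * k ≤ (Finset.univ : Finset (Fin n)).card := by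
    rw [Finset.card_univ, Fintype.card_fin]
    exact hnk
  have hkey := QRaux.key φ ρ hq0 hq hρ0 hρ1 hsum hbad hk m Finset.univ hcardU
  -- the cap
  set T := (QRaux.pick φ ρ hq0 (Finset.univ : Finset (Fin n))).2 with hT
  set c := (QRaux.pick φ ρ hq0 (Finset.univ : Finset (Fin n))).1 with hc
  have hTcard : T.card < k := QRaux.pick_card_lt φ ρ hq0 hbad hk _
  have hcap : QRaux.Phi φ ρ c T ≤ (T.card:ℝ) * ((T.card:ℝ) - 1) :=
    QRaux.Phi_le φ ρ c (hρ0 c).le T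
  have hTk : (T.card:ℝ) ≤ (k:ℝ) := by
    have : T.card ≤ k := le_of_lt hTcard
    exact_mod_cast this
  have hTnn : (0:ℝ) ≤ (T.card:ℝ) := by positivity
  have hcap2 : (T.card:ℝ) * ((T.card:ℝ) - 1) ≤ (k:ℝ) * (k:ℝ) := by nlinarith
  have hklt : (k:ℝ) < (2:ℝ)^(L+1) := by
    have h1 : k < 2^(L+1) := Nat.lt_pow_succ_log_self (by norm_num) k
    have h2 : ((2:ℕ)^(L+1) : ℝ) = (2:ℝ)^(L+1) := by push_cast; ring
    calc (k:ℝ) < ((2:ℕ)^(L+1) : ℝ) := by exact_mod_cast h1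
      _ = (2:ℝ)^(L+1) := h2
  have hpow : (2:ℝ)^m = ((2:ℝ)^(L+1))^2 := by
    rw [show m = (L+1)*2 by rw [hmdef]; ring, pow_mul]
  have hk2lt : (k:ℝ) * (k:ℝ) < (2:ℝ)^m := by
    rw [hpow]
    have hknn : (0:ℝ) ≤ (k:ℝ) := by positivity
    nlinarith
  linarith [hkey, hcap, hcap2, hk2lt]
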